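/- Let g > 0, h > 0, δ₁ ∈ ℝ, k ∈ ℝ with k ≠ 0, and ω ∈ ℂ. There exists a pair (η₀, u₀) ∈ ℂ² with (η₀, u₀) ≠ (0,0) satisfying the linear system (−iω)·η₀ + i·k·h·(1 + (k·h)²/6)·u₀ = 0 and g·i·k·η₀ + (−iω + δ₁ + (δ₁/2)·(k·h)² − (iω/2)·(k·h)²)·u₀ = 0 if and only if ω² + i·ω·δ₁ − g·h·k²·(1 + (k·h)²/6)/(1 + (k·h)²/2) = 0. -/
import Mathlib


open Complex in
/-- the plane-wave linear system for the Boussinesq equations with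
dissipation model I has a nontrivial solution `(η₀, u₀) ≠ (0,0)` iff the
dispersion relation `ω² + iωδ₁ − ghk²(1+(kh)²/6)/(1+(kh)²/2) = 0` holds. -/
theorem boussinesq_dispersion_model_I (g h δ₁ k : ℝ)
    (hg : g > 0) (hh : h > 0) (hk : k ≠ 0) (ω : ℂ) :
    (∃ η₀ u₀ : ℂ, (η₀, u₀) ≠ (0, 0) ∧
      (-(I * ω)) * η₀
        + I * (k : ℂ) * (h : ℂ) * ((1 : ℂ) + ((k * h : ℝ) : ℂ)^2 / 6) * u₀ = 0 ∧
      (g : ℂ) * I * (k : ℂ) * η₀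
        + (-(I * ω) + (δ₁ : ℂ) + ((δ₁ / 2 : ℝ) : ℂ) * ((k * h : ℝ) : ℂ)^2
            - (I * ω / 2) * ((k * h : ℝ) : ℂ)^2) * u₀ = 0)
    ↔
    ω^2 + I * ω * (δ₁ : ℂ)
      - ((g * h * k^2 * ((1 + (k * h)^2 / 6) / (1 + (k * h)^2 / 2)) : ℝ) : ℂ) = 0 := by
  set A : ℂ := -(I * ω) with hA
  set B : ℂ := I * (k : ℂ) * (h : ℂ) * ((1 : ℂ) + ((k * h : ℝ) : ℂ)^2 / 6) with hB
  set C : ℂ := (g : ℂ) * I * (k : ℂ) with hC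
  set D : ℂ := -(I * ω) + (δ₁ : ℂ) + ((δ₁ / 2 : ℝ) : ℂ) * ((k * h : ℝ) : ℂ)^2
      - (I * ω / 2) * ((k * h : ℝ) : ℂ)^2 with hD
  have hden2 : (1 : ℝ) + (k * h)^2 / 2 ≠ 0 := by positivity
  have hden6 : (1 : ℝ) + (k * h)^2 / 6 ≠ 0 := by positivity
  have hdenC : ((1 : ℂ) + ((k * h : ℝ) : ℂ)^2 / 2) ≠ 0 := by
    rw [show ((1 : ℂ) + ((k * h : ℝ) : ℂ)^2 / 2) = (((1 + (k * h)^2 / 2 : ℝ)) : ℂ) from by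
      push_cast; ring]
    exact Complex.ofReal_ne_zero.mpr hden2
  have hden6C : ((1 : ℂ) + ((k * h : ℝ) : ℂ)^2 / 6) ≠ 0 := by
    rw [show ((1 : ℂ) + ((k * h : ℝ) : ℂ)^2 / 6) = (((1 + (k * h)^2 / 6 : ℝ)) : ℂ) from by
      push_cast; ring]
    exact Complex.ofReal_ne_zero.mpr hden6
  have hBne : B ≠ 0 := by
    rw [hB]
    exact mul_ne_zero (mul_ne_zero (mul_ne_zero I_ne_zero
      (Complex.ofReal_ne_zero.mpr hk)) (Complex.ofReal_ne_zero.mpr hh.ne')) hden6C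
  have hcast : ((g * h * k^2 * ((1 + (k * h)^2 / 6) / (1 + (k * h)^2 / 2)) : ℝ) : ℂ)
      = (g : ℂ) * (h : ℂ) * (k : ℂ)^2 *
        (((1 : ℂ) + ((k * h : ℝ) : ℂ)^2 / 6) / ((1 : ℂ) + ((k * h : ℝ) : ℂ)^2 / 2)) := by
    push_cast; ring
  have hdet_iff : (A * D - B * C = 0) ↔
      (ω^2 + I * ω * (δ₁ : ℂ)
        - ((g * h * k^2 * ((1 + (k * h)^2 / 6) / (1 + (k * h)^2 / 2)) : ℝ) : ℂ) = 0) := by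
    rw [hcast, hA, hB, hC, hD]
    have hI2 : (I : ℂ)^2 = -1 := Complex.I_sq
    push_cast
    push_cast at hdenC
    conv_rhs => rw [sub_eq_zero, ← mul_div_assoc, eq_div_iff hdenC]
    constructor
    · intro hd
      linear_combination (-1 : ℂ) * hd
        + (ω^2 * (1 + ((k : ℂ) * (h : ℂ))^2 / 2)
            - (g : ℂ) * (k : ℂ)^2 * (h : ℂ) * (1 + ((k : ℂ) * (h : ℂ))^2 / 6)) * hI2
    · intro hd
      linear_combination (-1 : ℂ) * hd
        + (ω^2 * (1 + ((k : ℂ) * (h : ℂ))^2 / 2)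
            - (g : ℂ) * (k : ℂ)^2 * (h : ℂ) * (1 + ((k : ℂ) * (h : ℂ))^2 / 6)) * hI2
  constructor
  · rintro ⟨η, u, hne, h1, h2⟩
    rw [← hdet_iff]
    by_contra hdd
    apply hne
    have hη : (A * D - B * C) * η = 0 := by linear_combination D * h1 - B * h2
    have hu : (A * D - B * C) * u = 0 := by linear_combination A * h2 - C * h1
    have hη0 : η = 0 := by
      rcases mul_eq_zero.mp hη with h | h
      · exact absurd h hdd
      · exact h
    have hu0 : u = 0 := by
      rcases mul_eq_zero.mp hu with h | h
      · exact absurd h hdd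
      · exact h
    simp [hη0, hu0]
  · intro hd
    rw [← hdet_iff] at hd
    exact ⟨B, -A, fun hc => hBne (congrArg Prod.fst hc), by ring,
      by linear_combination (-1 : ℂ) * hd⟩
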